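/- Let n ≥ 1 and h(x,y) = (x^n)² + (x − y^n)². Then h has an isolated zero at (0,0), and for every d ≤ n², the limit lim_{(x,y)→(0,0)} (x^{2d} + y^{2d})/h(x,y) is not 0 (in fact h(t^n, t) = t^{2n²}, so along this curve the quotient does not tend to 0). -/

import Mathlib

open Filter

/-- For `h(x,y) = x^{2n} + (x - y^n)²` with `n ≥ 1`, the origin is an isolated zero of
`h`, `h(t^n, t) = t^{2n²}`, and for every `d ≤ n²` the quotient
`(x^{2d}+y^{2d})/h(x,y)` does not tend to `0` as `(x,y) → (0,0)`. -/
theorem kollar_example (n : ℕ) (hn : 1 ≤ n)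
    (h : ℝ × ℝ → ℝ) (hh : ∀ q : ℝ × ℝ, h q = (q.1 ^ n) ^ 2 + (q.1 - q.2 ^ n) ^ 2) :
    (∀ q : ℝ × ℝ, h q = 0 → q = 0) ∧
    (∀ t : ℝ, h (t ^ n, t) = t ^ (2 * n ^ 2)) ∧
    ∀ d : ℕ, d ≤ n ^ 2 →
      ¬ Tendsto (fun q : ℝ × ℝ => (q.1 ^ (2 * d) + q.2 ^ (2 * d)) / h q)
        (nhdsWithin 0 {q | q ≠ 0}) (nhds 0) := by
  have hn0 : n ≠ 0 := Nat.one_le_iff_ne_zero.mp hn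
  have hcompute : ∀ t : ℝ, h (t ^ n, t) = t ^ (2 * n ^ 2) := by
    intro t
    rw [hh]
    simp only [sub_self]
    ring
  refine ⟨?_, hcompute, ?_⟩
  · rintro ⟨x, y⟩ hq
    rw [hh] at hq
    simp only at hq
    have h1 : (x ^ n) ^ 2 = 0 := by nlinarith [sq_nonneg (x ^ n), sq_nonneg (x - y ^ n)]
    have h2 : (x - y ^ n) ^ 2 = 0 := by nlinarith [sq_nonneg (x ^ n), sq_nonneg (x - y ^ n)]
    have hx : x = 0 := by
      have := pow_eq_zero_iff (two_ne_zero) |>.mp h1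
      exact pow_eq_zero_iff hn0 |>.mp this
    have hy : y = 0 := by
      have hyn : y ^ n = 0 := by
        have := pow_eq_zero_iff (two_ne_zero) |>.mp h2
        rw [hx] at this; linarith
      exact pow_eq_zero_iff hn0 |>.mp hyn
    simp [Prod.ext_iff, hx, hy]
  · intro d hd H
    have hphi : Tendsto (fun t : ℝ => ((t ^ n, t) : ℝ × ℝ))
        (nhdsWithin 0 {t : ℝ | 0 < t}) (nhdsWithin 0 {q : ℝ × ℝ | q ≠ 0}) := by
      rw [tendsto_nhdsWithin_iff]
      constructor
      · have : Tendsto (fun t : ℝ => ((t ^ n, t) : ℝ × ℝ)) (nhds 0)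
            (nhds ((0 : ℝ) ^ n, (0 : ℝ))) :=
          ((continuous_pow n).prodMk continuous_id).tendsto 0
        simpa [zero_pow hn0, Prod.mk_zero_zero] using this.mono_left nhdsWithin_le_nhds
      · filter_upwards [self_mem_nhdsWithin] with t ht
        simp only [Set.mem_setOf_eq, ne_eq, Prod.ext_iff, Prod.fst_zero, Prod.snd_zero, not_and]
        intro _; exact ht.ne'
    have H2 := H.comp hphi
    have hlt := (Metric.tendsto_nhds.mp H2) 1 one_pos
    have hmem : Set.Ioo (0 : ℝ) 1 ∈ nhdsWithin 0 {t : ℝ | 0 < t} := by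
      have : {t : ℝ | 0 < t} = Set.Ioi (0 : ℝ) := rfl
      rw [this]
      exact Ioo_mem_nhdsGT (by norm_num)
    have hne : (nhdsWithin (0 : ℝ) {t : ℝ | 0 < t}).NeBot := nhdsGT_neBot 0
    obtain ⟨t, ht1, ht2⟩ := (hlt.and (eventually_of_mem hmem (fun x hx => hx))).exists
    obtain ⟨htpos, htlt⟩ := ht2
    -- compute the quotient at t
    have hD : h (t ^ n, t) = t ^ (2 * n ^ 2) := hcompute t
    have hDpos : (0 : ℝ) < t ^ (2 * n ^ 2) := pow_pos htpos _
    have hnum : t ^ (2 * n ^ 2) ≤ (t ^ n) ^ (2 * d) + t ^ (2 * d) := by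
      have h1 : t ^ (2 * n ^ 2) ≤ t ^ (2 * d) :=
        pow_le_pow_of_le_one htpos.le htlt.le (by nlinarith)
      have h2 : (0 : ℝ) ≤ (t ^ n) ^ (2 * d) := by positivity
      linarith
    have hge : (1 : ℝ) ≤ ((t ^ n) ^ (2 * d) + t ^ (2 * d)) / h (t ^ n, t) := by
      rw [hD, le_div_iff₀ hDpos, one_mul]; exact hnum
    simp only [Function.comp, Real.dist_eq, sub_zero] at ht1
    have : |((t ^ n) ^ (2 * d) + t ^ (2 * d)) / h (t ^ n, t)| < 1 := ht1
    rw [abs_of_nonneg (by linarith)] at this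
    linarith
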